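/- Let ζ(x) = 2x − sin(2x), ψ(x) = sin(x)/(1 + ζ(x)²), and V(x) = −32·sin(x)·(ζ(x)³·cos(x) − 3·ζ(x)²·sin(x)³ + ζ(x)·cos(x) + sin(x)³)/(1 + ζ(x)²)². Then for every x ∈ ℝ one has −ψ''(x) + V(x)·ψ(x) = ψ(x); that is, ψ is a solution of the one-dimensional Schrödinger eigenvalue equation with the von Neumann–Wigner potential V and eigenvalue 1. -/

import Mathlib

open Real

/-- ζ(x) = 2x − sin(2x) -/
noncomputable def zeta (x : ℝ) : ℝ := 2 * x - Real.sin (2 * x)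

/-- ψ(x) = sin(x)/(1 + ζ(x)²) -/
noncomputable def psi (x : ℝ) : ℝ := Real.sin x / (1 + zeta x ^ 2)

/-- One-dimensional von Neumann–Wigner potential. -/
noncomputable def V (x : ℝ) : ℝ :=
  -32 * Real.sin x *
    (zeta x ^ 3 * Real.cos x - 3 * zeta x ^ 2 * Real.sin x ^ 3
      + zeta x * Real.cos x + Real.sin x ^ 3) / (1 + zeta x ^ 2) ^ 2

noncomputable def psi1 (x : ℝ) : ℝ :=
  (Real.cos x * (1 + zeta x ^ 2)
    - Real.sin x * (2 * zeta x * (2 - 2 * Real.cos (2 * x)))) / (1 + zeta x ^ 2) ^ 2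

noncomputable def psi2 (x : ℝ) : ℝ :=
  ((-Real.sin x * (1 + zeta x ^ 2) + Real.cos x * (2 * zeta x * (2 - 2 * Real.cos (2 * x)))
      - (Real.cos x * (2 * zeta x * (2 - 2 * Real.cos (2 * x)))
        + Real.sin x * (2 * (2 - 2 * Real.cos (2 * x)) ^ 2 + 8 * zeta x * Real.sin (2 * x))))
      * (1 + zeta x ^ 2) ^ 2
    - (Real.cos x * (1 + zeta x ^ 2) - Real.sin x * (2 * zeta x * (2 - 2 * Real.cos (2 * x))))
      * (2 * (1 + zeta x ^ 2) * (2 * zeta x * (2 - 2 * Real.cos (2 * x)))))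
    / ((1 + zeta x ^ 2) ^ 2) ^ 2

lemma hD (x : ℝ) : (1 : ℝ) + zeta x ^ 2 ≠ 0 := by positivity

lemma hzeta (x : ℝ) : HasDerivAt zeta (2 - 2 * Real.cos (2 * x)) x := by
  have h1 : HasDerivAt (fun y : ℝ => 2 * y) 2 x := by
    simpa using (hasDerivAt_id x).const_mul 2
  have h2 : HasDerivAt (fun y : ℝ => Real.sin (2 * y)) (Real.cos (2 * x) * 2) x :=
    (Real.hasDerivAt_sin (2 * x)).comp x h1
  have := (hasDerivAt_id x).const_mul 2 |>.sub h2
  convert this using 1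
  all_goals first | rfl | ring

lemma hden (x : ℝ) : HasDerivAt (fun y => 1 + zeta y ^ 2)
    (2 * zeta x * (2 - 2 * Real.cos (2 * x))) x := by
  have := ((hzeta x).pow 2).const_add 1
  exact this.congr_deriv (by ring)

lemma hpsi (x : ℝ) : HasDerivAt psi (psi1 x) x := by
  have := (Real.hasDerivAt_sin x).div (hden x) (hD x)
  exact this.congr_deriv rfl

lemma hw (x : ℝ) : HasDerivAt (fun y : ℝ => 2 - 2 * Real.cos (2 * y))
    (4 * Real.sin (2 * x)) x := by
  have h1 : HasDerivAt (fun y : ℝ => 2 * y) 2 x := by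
    simpa using (hasDerivAt_id x).const_mul 2
  have h2 : HasDerivAt (fun y : ℝ => Real.cos (2 * y)) (-Real.sin (2 * x) * 2) x :=
    (Real.hasDerivAt_cos (2 * x)).comp x h1
  have := (h2.const_mul 2).const_sub 2
  exact this.congr_deriv (by ring)

lemma hnum (x : ℝ) : HasDerivAt
    (fun y => Real.cos y * (1 + zeta y ^ 2)
      - Real.sin y * (2 * zeta y * (2 - 2 * Real.cos (2 * y))))
    (-Real.sin x * (1 + zeta x ^ 2) + Real.cos x * (2 * zeta x * (2 - 2 * Real.cos (2 * x)))
      - (Real.cos x * (2 * zeta x * (2 - 2 * Real.cos (2 * x)))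
        + Real.sin x * (2 * (2 - 2 * Real.cos (2 * x)) ^ 2 + 8 * zeta x * Real.sin (2 * x)))) x := by
  have hzw : HasDerivAt (fun y => 2 * zeta y * (2 - 2 * Real.cos (2 * y)))
      (2 * (2 - 2 * Real.cos (2 * x)) ^ 2 + 8 * zeta x * Real.sin (2 * x)) x := by
    have := (((hzeta x).const_mul 2).mul (hw x))
    exact this.congr_deriv (by ring)
  have h1 := (Real.hasDerivAt_cos x).mul (hden x)
  have h2 := (Real.hasDerivAt_sin x).mul hzw
  have := h1.sub h2
  exact this.congr_deriv (by ring)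

lemma hpsi1 (x : ℝ) : HasDerivAt psi1 (psi2 x) x := by
  have hd2 : HasDerivAt (fun y => (1 + zeta y ^ 2) ^ 2)
      (2 * (1 + zeta x ^ 2) * (2 * zeta x * (2 - 2 * Real.cos (2 * x)))) x := by
    have := (hden x).pow 2
    exact this.congr_deriv (by ring)
  have hd2ne : ((1 : ℝ) + zeta x ^ 2) ^ 2 ≠ 0 := pow_ne_zero _ (hD x)
  have := (hnum x).div hd2 hd2ne
  exact this.congr_deriv rfl

lemma deriv_psi : deriv psi = psi1 := funext fun x => (hpsi x).deriv

lemma deriv_psi1 (x : ℝ) : deriv psi1 x = psi2 x := (hpsi1 x).deriv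

theorem vonNeumannWigner_eigenfunction :
    ∀ x : ℝ, -(deriv (deriv psi)) x + V x * psi x = psi x := by
  intro x
  rw [deriv_psi, deriv_psi1]
  have pyth : Real.sin x ^ 2 + Real.cos x ^ 2 = 1 := Real.sin_sq_add_cos_sq x
  have hDne := hD x
  rw [psi2, psi, V, Real.cos_two_mul, Real.sin_two_mul]
  set s := Real.sin x
  set c := Real.cos x
  set z := zeta x
  field_simp
  ring_nf
  linear_combination (- 16*c*z - 16*c*z^3 - 32*s + 96*s*z^2 + 32*s*c^2 - 96*s*c^2*z^2 - 32*s^3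
    + 96*s^3*z^2) * pyth
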